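/- Fix an integer n ≥ 1 and p = (p₀,…,p_{n−1}) ∈ [0,1]^n, and let X ~ X(n,p) be a multi-parameter random simplicial complex. Then for every Y ∈ Sₙ, P(Y ⊆ X) = ∏_{i=0}^{n−1} p_i^{f_i(Y)} (with the convention 0⁰ = 1). -/

import Mathlib

open MeasureTheory Finset Filter


/-- A (sub)complex of the complete complex on the vertex type `V`:
a family of finite subsets closed under taking subsets and containing `∅`. -/
def SComplex {V : Type*} [DecidableEq V] (Y : Finset (Finset V)) : Prop :=
  ∅ ∈ Y ∧ ∀ σ ∈ Y, ∀ τ ∈ σ.powerset, τ ∈ Y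

instance {V : Type*} [DecidableEq V] :
    DecidablePred (fun Y : Finset (Finset V) => SComplex Y) :=
  fun Y => decidable_of_iff (∅ ∈ Y ∧ ∀ σ ∈ Y, ∀ τ ∈ σ.powerset, τ ∈ Y) Iff.rfl

/-- `scount Y m` = number of simplices of `Y` with `m` vertices (i.e. `(m-1)`-simplices);
`f_k(Y) = scount Y (k+1)` and `f_{-1}(Y) = scount Y 0`. -/
def scount {V : Type*} (Y : Finset (Finset V)) (m : ℕ) : ℕ :=
  (Y.filter (fun σ => σ.card = m)).card

/-- Number of external `i`-simplices of `Y` in the complete complex on `Fin n`: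
`i`-simplices `σ ∉ Y` all of whose strict subsets lie in `Y`. -/
def ecount {n : ℕ} (Y : Finset (Finset (Fin n))) (i : ℕ) : ℕ :=
  (Finset.univ.filter (fun σ : Finset (Fin n) =>
    σ.card = i + 1 ∧ σ ∉ Y ∧ ∀ τ ∈ σ.powerset, τ ≠ σ → τ ∈ Y)).card

/-- The weight `∏_{i=0}^{n-1} p_i^{f_i(Y)} (1-p_i)^{e_i(Y)}` of the
multi-parameter random simplicial complex model. -/
noncomputable def mpWeight {n : ℕ} (p : Fin n → ℝ) (Y : Finset (Finset (Fin n))) : ℝ :=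
  ∏ i : Fin n, p i ^ scount Y (i.1 + 1) * (1 - p i) ^ ecount Y i.1

/-- The probability of an event, as a real number. -/
noncomputable def prb {Ω : Type*} [MeasurableSpace Ω] (μ : Measure Ω) (A : Set Ω) : ℝ :=
  (μ A).toReal

/-- Conditional probability `P(A | B)`, as a real number. -/
noncomputable def condP {Ω : Type*} [MeasurableSpace Ω] (μ : Measure Ω) (A B : Set Ω) : ℝ :=
  prb μ (A ∩ B) / prb μ B

/-- A random subcomplex is homogeneous if its distribution is invariant under
every permutation of the vertices. -/
def Homogeneous {n : ℕ} {Ω : Type*} [MeasurableSpace Ω] (μ : Measure Ω)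
    (X : Ω → Finset (Finset (Fin n))) : Prop :=
  ∀ (g : Equiv.Perm (Fin n)) (Y : Finset (Finset (Fin n))),
    prb μ {ω | Finset.image (fun σ => σ.image (⇑g)) (X ω) = Y} = prb μ {ω | X ω = Y}

/-- Spatial independence of a random subcomplex. -/
def SpatInd {n : ℕ} {Ω : Type*} [MeasurableSpace Ω] (μ : Measure Ω)
    (X : Ω → Finset (Finset (Fin n))) : Prop :=
  ∀ Y₁ Y₂ : Finset (Finset (Fin n)), SComplex Y₁ → SComplex Y₂ →
    prb μ {ω | Y₁ ∪ Y₂ ⊆ X ω} * prb μ {ω | Y₁ ∩ Y₂ ⊆ X ω} =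
      prb μ {ω | Y₁ ⊆ X ω} * prb μ {ω | Y₂ ⊆ X ω}

/-- The `k`-dimensional standard simplex `{0, 1, …, k}` in `Fin n`
(for `k = -1` this is the empty simplex). -/
def stdSimp (n : ℕ) (k : ℤ) : Finset (Fin n) :=
  Finset.univ.filter (fun v => (v : ℤ) ≤ k)

/-- The `k`-dimensional simplex `{1, 2, …, k+1}` in `Fin n`,
sharing `k` vertices with `stdSimp n k`. -/
def stdSimp' (n : ℕ) (k : ℕ) : Finset (Fin n) :=
  Finset.univ.filter (fun v => 1 ≤ (v : ℕ) ∧ (v : ℕ) ≤ k + 1)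

/-- The parameter `q_k = P(τ ∈ X)` for a `k`-simplex `τ` (with `q_{-1} = 1`). -/
noncomputable def qpar {n : ℕ} {Ω : Type*} [MeasurableSpace Ω] (μ : Measure Ω)
    (X : Ω → Finset (Finset (Fin n))) (k : ℤ) : ℝ :=
  if k < 0 then 1 else prb μ {ω | stdSimp n k ∈ X ω}

/-- The parameter `r_k = P(σ ∈ X | τ ∈ X)` for a `(k+1)`-simplex `σ` containing the
`k`-simplex `τ`, if `q_k > 0`, and `0` otherwise (with `r_{-1} = q_0`). -/
noncomputable def rpar {n : ℕ} {Ω : Type*} [MeasurableSpace Ω] (μ : Measure Ω)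
    (X : Ω → Finset (Finset (Fin n))) (k : ℤ) : ℝ :=
  if 0 < qpar μ X k then
    condP μ {ω | stdSimp n (k + 1) ∈ X ω} {ω | stdSimp n k ∈ X ω}
  else 0

/-- The parameter `s_k = P(τ₁ ∪ τ₂ ∈ X | τ₁ ∈ X, τ₂ ∈ X)` for `k`-simplices `τ₁, τ₂`
sharing `k` vertices, if `P(τ₁ ∈ X, τ₂ ∈ X) > 0`, and `0` otherwise. -/
noncomputable def spar {n : ℕ} {Ω : Type*} [MeasurableSpace Ω] (μ : Measure Ω)
    (X : Ω → Finset (Finset (Fin n))) (k : ℕ) : ℝ :=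
  if 0 < prb μ ({ω | stdSimp n k ∈ X ω} ∩ {ω | stdSimp' n k ∈ X ω}) then
    condP μ {ω | stdSimp n (k + 1) ∈ X ω}
      ({ω | stdSimp n k ∈ X ω} ∩ {ω | stdSimp' n k ∈ X ω})
  else 0

section MPAux

variable {n : ℕ}

/-- Per-simplex parameter `p_{dim σ}` (junk value `1` if out of range). -/
noncomputable def qv (p : Fin n → ℝ) (σ : Finset (Fin n)) : ℝ :=
  if h : σ.card - 1 < n then p ⟨σ.card - 1, h⟩ else 1

/-- `σ` is an external simplex of `Z`. -/
def extP (Z : Finset (Finset (Fin n))) (σ : Finset (Fin n)) : Prop :=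
  σ ∉ Z ∧ ∀ τ ∈ σ.powerset, τ ≠ σ → τ ∈ Z

instance (Z : Finset (Finset (Fin n))) : DecidablePred (extP Z) :=
  fun σ => inferInstanceAs (Decidable (σ ∉ Z ∧ ∀ τ ∈ σ.powerset, τ ≠ σ → τ ∈ Z))

/-- The complex generated by coin flips `ω`. -/
def Xof (ω : Finset (Fin n) → Bool) : Finset (Finset (Fin n)) :=
  Finset.univ.filter (fun σ => ∀ τ ∈ σ.powerset, τ ≠ ∅ → ω τ = true)

lemma mem_Xof {ω : Finset (Fin n) → Bool} {σ : Finset (Fin n)} :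
    σ ∈ Xof ω ↔ ∀ τ ∈ σ.powerset, τ ≠ ∅ → ω τ = true := by
  simp [Xof]

lemma Xof_complex (ω : Finset (Fin n) → Bool) : SComplex (Xof ω) := by
  constructor
  · rw [mem_Xof]
    intro τ hτ hτne
    exact absurd (Finset.subset_empty.1 (Finset.mem_powerset.1 hτ)) hτne
  · intro σ hσ τ hτ
    rw [mem_Xof] at hσ ⊢
    intro ρ hρ hρne
    exact hσ ρ (Finset.mem_powerset.2
      ((Finset.mem_powerset.1 hρ).trans (Finset.mem_powerset.1 hτ))) hρne

noncomputable def bse (p : Fin n → ℝ) (σ : Finset (Fin n)) (b : Bool) : ℝ :=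
  if σ = ∅ then (if b then 1 else 0) else (if b then qv p σ else 1 - qv p σ)

noncomputable def Wt (p : Fin n → ℝ) (ω : Finset (Fin n) → Bool) : ℝ :=
  ∏ σ : Finset (Fin n), bse p σ (ω σ)

lemma card_le_n (σ : Finset (Fin n)) : σ.card ≤ n := by
  simpa using Finset.card_le_univ σ

lemma qv_eq (p : Fin n → ℝ) {σ : Finset (Fin n)} {i : Fin n} (h : σ.card = i.1 + 1) :
    qv p σ = p i := by
  have h1 : σ.card - 1 < n := by have := i.2; omega
  rw [qv, dif_pos h1]
  congr 1
  apply Fin.ext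
  simp only []
  omega

lemma grouping (hn : 1 ≤ n) (g : Fin n → ℝ) (F : Finset (Fin n) → ℝ)
    (s : Finset (Finset (Fin n))) (hs : ∀ σ ∈ s, σ ≠ ∅)
    (hF : ∀ σ ∈ s, ∀ i : Fin n, σ.card = i.1 + 1 → F σ = g i) :
    ∏ σ ∈ s, F σ = ∏ i : Fin n, g i ^ (s.filter (fun σ => σ.card = i.1 + 1)).card := by
  have hlt : ∀ σ : Finset (Fin n), min (σ.card - 1) (n - 1) < n :=
    fun σ => Nat.lt_of_le_of_lt (Nat.min_le_right _ _) (by omega)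
  rw [← Finset.prod_fiberwise_of_maps_to
    (g := fun σ : Finset (Fin n) => (⟨min (σ.card - 1) (n - 1), hlt σ⟩ : Fin n))
    (t := Finset.univ) (fun σ _ => Finset.mem_univ _) F]
  refine Finset.prod_congr rfl (fun i _ => ?_)
  have hfe : s.filter (fun σ => (⟨min (σ.card - 1) (n - 1), hlt σ⟩ : Fin n) = i)
      = s.filter (fun σ => σ.card = i.1 + 1) := by
    apply Finset.filter_congr
    intro σ hσ
    have h1 : 1 ≤ σ.card := Finset.card_pos.2 (Finset.nonempty_iff_ne_empty.2 (hs σ hσ))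
    have h2 : σ.card ≤ n := card_le_n σ
    have h3 := i.2
    constructor
    · intro h
      have h4 : min (σ.card - 1) (n - 1) = i.1 := congrArg Fin.val h
      omega
    · intro h
      apply Fin.ext
      simp only []
      omega
  rw [hfe,
    Finset.prod_congr rfl (fun σ hσ => hF σ (Finset.mem_filter.1 hσ).1 i (Finset.mem_filter.1 hσ).2),
    Finset.prod_const]

lemma sum_key (p : Fin n → ℝ) (C : Finset (Fin n) → Bool → Prop)
    [∀ σ b, Decidable (C σ b)] :
    ∑ ω : Finset (Fin n) → Bool, Wt p ω * (if ∀ σ, C σ (ω σ) then (1 : ℝ) else 0)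
      = ∏ σ : Finset (Fin n),
          ((if C σ true then bse p σ true else 0) + (if C σ false then bse p σ false else 0)) := by
  have h1 : ∀ ω : Finset (Fin n) → Bool,
      Wt p ω * (if ∀ σ, C σ (ω σ) then (1 : ℝ) else 0)
        = ∏ σ : Finset (Fin n), (if C σ (ω σ) then bse p σ (ω σ) else 0) := by
    intro ω
    rw [Wt, ← Fintype.prod_boole (p := fun σ => C σ (ω σ)), ← Finset.prod_mul_distrib]
    exact Finset.prod_congr rfl (fun σ _ => by by_cases h : C σ (ω σ) <;> simp [h])
  simp_rw [h1]
  have h2 := Finset.prod_univ_sum (fun _ : Finset (Fin n) => (Finset.univ : Finset Bool))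
      (fun σ b => if C σ b then bse p σ b else 0)
  rw [Fintype.piFinset_univ] at h2
  rw [← h2]
  exact Finset.prod_congr rfl (fun σ _ => by rw [Fintype.sum_bool])

end MPAux
section MPAux2

variable {n : ℕ}

lemma filter_ne_empty_filter (Y : Finset (Finset (Fin n))) (i : Fin n) :
    ((Y.filter (fun σ => σ ≠ ∅)).filter (fun σ => σ.card = i.1 + 1)).card
      = scount Y (i.1 + 1) := by
  rw [scount]
  congr 1
  ext σ
  simp only [Finset.mem_filter]
  constructor
  · tauto
  · intro ⟨h1, h2⟩
    refine ⟨⟨h1, ?_⟩, h2⟩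
    intro he
    rw [he, Finset.card_empty] at h2
    omega

lemma filter_ext_filter (Z : Finset (Finset (Fin n))) (i : Fin n) :
    (((Finset.univ : Finset (Finset (Fin n))).filter (extP Z)).filter
        (fun σ => σ.card = i.1 + 1)).card = ecount Z i.1 := by
  rw [ecount]
  congr 1
  ext σ
  simp only [Finset.mem_filter, Finset.mem_univ, true_and, extP]
  tauto

lemma subset_Xof_iff (Y : Finset (Finset (Fin n))) (hY : SComplex Y)
    (ω : Finset (Fin n) → Bool) :
    Y ⊆ Xof ω ↔ ∀ σ : Finset (Fin n), (σ ∈ Y ∧ σ ≠ ∅ → ω σ = true) := by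
  constructor
  · intro hsub σ ⟨hσY, hσne⟩
    exact (mem_Xof.1 (hsub hσY)) σ (Finset.mem_powerset.2 (Finset.Subset.refl σ)) hσne
  · intro h σ hσY
    rw [mem_Xof]
    intro τ hτ hτne
    exact h τ ⟨hY.2 σ hσY τ hτ, hτne⟩

lemma Xof_eq_iff (Z : Finset (Finset (Fin n))) (hZ : SComplex Z)
    (ω : Finset (Fin n) → Bool) :
    Xof ω = Z ↔ ∀ σ : Finset (Fin n),
      ((σ ∈ Z ∧ σ ≠ ∅ → ω σ = true) ∧ (extP Z σ → ω σ = false)) := by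
  constructor
  · intro h σ
    constructor
    · intro ⟨hσZ, hσne⟩
      rw [← h] at hσZ
      exact (mem_Xof.1 hσZ) σ (Finset.mem_powerset.2 (Finset.Subset.refl σ)) hσne
    · intro hext
      have hσn : σ ∉ Xof ω := by rw [h]; exact hext.1
      rw [mem_Xof] at hσn
      push_neg at hσn
      obtain ⟨τ, hτs, hτne, hτf⟩ := hσn
      rcases eq_or_ne τ σ with rfl | hne
      · simpa using hτf
      · exfalso
        have hτZ : τ ∈ Z := hext.2 τ hτs hne
        rw [← h, mem_Xof] at hτZ
        exact hτf (hτZ τ (Finset.mem_powerset.2 (Finset.Subset.refl τ)) hτne.ne_empty)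
  · intro h
    ext σ
    constructor
    · intro hσ
      by_contra hσZ
      have hne : (σ.powerset.filter (fun τ => τ ∉ Z)).Nonempty :=
        ⟨σ, Finset.mem_filter.2 ⟨Finset.mem_powerset.2 (Finset.Subset.refl σ), hσZ⟩⟩
      obtain ⟨τ, hτmem, hτmin⟩ :=
        Finset.exists_min_image _ (fun τ => τ.card) hne
      obtain ⟨hτs, hτZ⟩ := Finset.mem_filter.1 hτmem
      have hext : extP Z τ := by
        refine ⟨hτZ, fun ρ hρ hρne => ?_⟩
        by_contra hρZ
        have hρmem : ρ ∈ σ.powerset.filter (fun τ => τ ∉ Z) :=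
          Finset.mem_filter.2 ⟨Finset.mem_powerset.2
            ((Finset.mem_powerset.1 hρ).trans (Finset.mem_powerset.1 hτs)), hρZ⟩
        have h1 := hτmin ρ hρmem
        have h2 : ρ ⊂ τ := Finset.ssubset_iff_subset_ne.2 ⟨Finset.mem_powerset.1 hρ, hρne⟩
        have := Finset.card_lt_card h2
        omega
      have hτne : τ ≠ ∅ := fun he => hτZ (he ▸ hZ.1)
      have := (h τ).2 hext
      have := (mem_Xof.1 hσ) τ hτs hτne
      simp_all
    · intro hσZ
      rw [mem_Xof]
      intro τ hτ hτne
      exact (h τ).1 ⟨hZ.2 σ hσZ τ hτ, hτne⟩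

end MPAux2
section MPAux3

variable {n : ℕ}

lemma sum_Wt_subset (hn : 1 ≤ n) (p : Fin n → ℝ) (Y : Finset (Finset (Fin n)))
    (hY : SComplex Y) :
    ∑ ω : Finset (Fin n) → Bool, Wt p ω * (if Y ⊆ Xof ω then (1 : ℝ) else 0)
      = ∏ i : Fin n, p i ^ scount Y (i.1 + 1) := by
  have hrw : ∀ ω : Finset (Fin n) → Bool,
      (if Y ⊆ Xof ω then (1 : ℝ) else 0)
        = (if ∀ σ : Finset (Fin n), (σ ∈ Y ∧ σ ≠ ∅ → ω σ = true) then (1 : ℝ) else 0) := by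
    intro ω
    exact if_congr (subset_Xof_iff Y hY ω) rfl rfl
  simp_rw [hrw]
  refine (sum_key p (fun σ b => σ ∈ Y ∧ σ ≠ ∅ → b = true)).trans ?_
  have hfac : ∀ σ : Finset (Fin n),
      ((if (σ ∈ Y ∧ σ ≠ ∅ → true = true) then bse p σ true else 0)
        + (if (σ ∈ Y ∧ σ ≠ ∅ → false = true) then bse p σ false else 0))
      = (if σ ∈ Y ∧ σ ≠ ∅ then qv p σ else 1) := by
    intro σ
    by_cases h0 : σ = ∅
    · subst h0; simp [bse]
    · by_cases h1 : σ ∈ Y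
      · simp [bse, h0, h1]
      · rw [if_pos (fun _ => rfl),
           if_pos (fun h : σ ∈ Y ∧ σ ≠ ∅ => absurd h.1 h1),
           if_neg (fun h : σ ∈ Y ∧ σ ≠ ∅ => h1 h.1)]
        simp [bse, h0]
  refine (Finset.prod_congr rfl (fun σ _ => hfac σ)).trans ?_
  rw [← Finset.prod_filter]
  have hflt : (Finset.univ : Finset (Finset (Fin n))).filter (fun σ => σ ∈ Y ∧ σ ≠ ∅)
      = Y.filter (fun σ => σ ≠ ∅) := by
    ext σ; simp
  rw [hflt, grouping hn p (qv p) _ (fun σ hσ => (Finset.mem_filter.1 hσ).2)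
    (fun σ _ i hi => qv_eq p hi)]
  exact Finset.prod_congr rfl (fun i _ => by rw [filter_ne_empty_filter])

lemma sum_Wt_eq (hn : 1 ≤ n) (p : Fin n → ℝ) (Z : Finset (Finset (Fin n)))
    (hZ : SComplex Z) :
    ∑ ω : Finset (Fin n) → Bool, Wt p ω * (if Xof ω = Z then (1 : ℝ) else 0)
      = mpWeight p Z := by
  have hrw : ∀ ω : Finset (Fin n) → Bool,
      (if Xof ω = Z then (1 : ℝ) else 0)
        = (if ∀ σ : Finset (Fin n),
            ((σ ∈ Z ∧ σ ≠ ∅ → ω σ = true) ∧ (extP Z σ → ω σ = false)) then (1 : ℝ) else 0) := by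
    intro ω
    exact if_congr (Xof_eq_iff Z hZ ω) rfl rfl
  simp_rw [hrw]
  refine (sum_key p (fun σ b => (σ ∈ Z ∧ σ ≠ ∅ → b = true) ∧ (extP Z σ → b = false))).trans ?_
  have hfac : ∀ σ : Finset (Fin n),
      ((if ((σ ∈ Z ∧ σ ≠ ∅ → true = true) ∧ (extP Z σ → true = false))
          then bse p σ true else 0)
        + (if ((σ ∈ Z ∧ σ ≠ ∅ → false = true) ∧ (extP Z σ → false = false))
          then bse p σ false else 0))
      = (if σ ∈ Z ∧ σ ≠ ∅ then qv p σ else 1) * (if extP Z σ then 1 - qv p σ else 1) := by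
    intro σ
    by_cases h0 : σ = ∅
    · have hZ0 : σ ∈ Z := h0 ▸ hZ.1
      have hne : ¬ extP Z σ := fun h => h.1 hZ0
      subst h0
      simp [bse, hne]
    · by_cases h1 : σ ∈ Z
      · have hne : ¬ extP Z σ := fun h => h.1 h1
        simp [bse, h0, h1, hne]
      · by_cases h2 : extP Z σ
        · simp [bse, h0, h1, h2]
        · rw [if_pos ⟨fun _ => rfl, fun h => absurd h h2⟩,
             if_pos ⟨fun h : σ ∈ Z ∧ σ ≠ ∅ => absurd h.1 h1, fun _ => rfl⟩,
             if_neg (fun h : σ ∈ Z ∧ σ ≠ ∅ => h1 h.1), if_neg h2]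
          simp [bse, h0]
  refine (Finset.prod_congr rfl (fun σ _ => hfac σ)).trans ?_
  rw [Finset.prod_mul_distrib, ← Finset.prod_filter, ← Finset.prod_filter]
  have hflt : (Finset.univ : Finset (Finset (Fin n))).filter (fun σ => σ ∈ Z ∧ σ ≠ ∅)
      = Z.filter (fun σ => σ ≠ ∅) := by
    ext σ; simp
  rw [hflt, grouping hn p (qv p) _ (fun σ hσ => (Finset.mem_filter.1 hσ).2)
    (fun σ _ i hi => qv_eq p hi),
    grouping hn (fun i => 1 - p i) (fun σ => 1 - qv p σ) _
      (fun σ hσ => fun he => ((Finset.mem_filter.1 hσ).2).1 (he ▸ hZ.1))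
      (fun σ _ i hi => by show 1 - qv p σ = 1 - p i; rw [qv_eq p hi]),
    mpWeight, Finset.prod_mul_distrib]
  congr 1
  · exact Finset.prod_congr rfl (fun i _ => by rw [filter_ne_empty_filter])
  · exact Finset.prod_congr rfl (fun i _ => by rw [filter_ext_filter])

lemma sum_over_T (hn : 1 ≤ n) (p : Fin n → ℝ) (Y : Finset (Finset (Fin n)))
    (hY : SComplex Y) :
    ∑ Z ∈ (Finset.univ : Finset (Finset (Finset (Fin n)))).filter
        (fun Z => SComplex Z ∧ Y ⊆ Z), mpWeight p Z
      = ∏ i : Fin n, p i ^ scount Y (i.1 + 1) := by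
  rw [← sum_Wt_subset hn p Y hY,
    Finset.sum_congr rfl (fun Z hZ =>
      (sum_Wt_eq hn p Z (Finset.mem_filter.1 hZ).2.1).symm),
    Finset.sum_comm]
  refine Finset.sum_congr rfl (fun ω _ => ?_)
  rw [← Finset.mul_sum]
  congr 1
  rw [Finset.sum_ite_eq]
  have : Xof ω ∈ (Finset.univ : Finset (Finset (Finset (Fin n)))).filter
      (fun Z => SComplex Z ∧ Y ⊆ Z) ↔ Y ⊆ Xof ω := by
    simp [Xof_complex ω]
  exact if_congr this rfl rfl

end MPAux3
/-- for a multi-parameter random simplicial complex,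
`P(Y ⊆ X) = ∏_i p_i^{f_i(Y)}`. -/
theorem multiParam_prob_subset (n : ℕ) (hn : 1 ≤ n)
    {Ω : Type*} [MeasurableSpace Ω] (μ : Measure Ω) [IsProbabilityMeasure μ]
    (X : Ω → Finset (Finset (Fin n)))
    (hmeas : ∀ Y, MeasurableSet {ω | X ω = Y})
    (hXc : ∀ ω, SComplex (X ω))
    (p : Fin n → ℝ) (hp : ∀ i, p i ∈ Set.Icc (0 : ℝ) 1)
    (hdist : ∀ Y : Finset (Finset (Fin n)), SComplex Y →
      prb μ {ω | X ω = Y} = mpWeight p Y) :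
    ∀ Y : Finset (Finset (Fin n)), SComplex Y →
      prb μ {ω | Y ⊆ X ω} = ∏ i : Fin n, p i ^ scount Y (i.1 + 1) := by
  intro Y hY
  set T := (Finset.univ : Finset (Finset (Finset (Fin n)))).filter
      (fun Z => SComplex Z ∧ Y ⊆ Z) with hT
  have hset : {ω | Y ⊆ X ω} = ⋃ Z ∈ T, {ω | X ω = Z} := by
    ext ω
    simp only [Set.mem_setOf_eq, Set.mem_iUnion, hT, Finset.mem_filter, Finset.mem_univ,
      true_and]
    constructor
    · intro h; exact ⟨X ω, ⟨hXc ω, h⟩, rfl⟩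
    · rintro ⟨Z, ⟨hZc, hYZ⟩, hXZ⟩; rw [hXZ]; exact hYZ
  have hdisj : (↑T : Set (Finset (Finset (Fin n)))).PairwiseDisjoint
      (fun Z => {ω | X ω = Z}) := by
    intro Z1 _ Z2 _ hne
    refine Set.disjoint_left.2 (fun ω h1 h2 => ?_)
    exact hne ((h1 : X ω = Z1).symm.trans (h2 : X ω = Z2))
  have hm : μ {ω | Y ⊆ X ω} = ∑ Z ∈ T, μ {ω | X ω = Z} := by
    rw [hset]; exact measure_biUnion_finset hdisj (fun Z _ => hmeas Z)
  have hr : prb μ {ω | Y ⊆ X ω} = ∑ Z ∈ T, prb μ {ω | X ω = Z} := by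
    rw [prb, hm, ENNReal.toReal_sum (fun Z _ => measure_ne_top μ _)]
    rfl
  rw [hr, Finset.sum_congr rfl (fun Z hZ => hdist Z (Finset.mem_filter.1 hZ).2.1)]
  exact sum_over_T hn p Y hY
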